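/- Let α > 0 and τ > 1, and set ω = α²/(τ²+1)². Then the function u defined by u(x) = e^{√ω x} for x < 0 and u(x) = τ e^{−√ω x} for x > 0 belongs to L²(ℝ), satisfies −u'' + ω u = 0 on ℝ \ {0}, and fulfills u(0⁺) = τ u(0⁻) and u'(0⁻) − τ u'(0⁺) = α u(0⁻). Moreover, ω = α²/(τ²+1)² is the unique ω > 0 for which a nonzero solution of this form exists. -/

import Mathlib

open MeasureTheory Filter Set Topology

theorem stmt5 (α τ : ℝ) (hα : 0 < α) (hτ : 1 < τ) :
    let ω : ℝ := α ^ 2 / (τ ^ 2 + 1) ^ 2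
    let u : ℝ → ℝ := fun x =>
      if x < 0 then Real.exp (Real.sqrt ω * x) else τ * Real.exp (-(Real.sqrt ω) * x)
    let du : ℝ → ℝ := fun x =>
      if x < 0 then Real.sqrt ω * Real.exp (Real.sqrt ω * x)
      else -(τ * Real.sqrt ω) * Real.exp (-(Real.sqrt ω) * x)
    -- u ∈ L²(ℝ)
    MemLp u 2 volume ∧
    -- −u'' + ω u = 0 on ℝ \ {0}, i.e. u'' = ω u
    (∀ x : ℝ, x ≠ 0 → HasDerivAt u (du x) x) ∧
    (∀ x : ℝ, x ≠ 0 → HasDerivAt du (ω * u x) x) ∧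
    -- one-sided limits and the jump conditions u(0⁺) = τ u(0⁻),
    -- u'(0⁻) − τ u'(0⁺) = α u(0⁻)
    Tendsto u (𝓝[<] 0) (𝓝 1) ∧ Tendsto u (𝓝[>] 0) (𝓝 τ) ∧ τ = τ * 1 ∧
    Tendsto du (𝓝[<] 0) (𝓝 (Real.sqrt ω)) ∧
    Tendsto du (𝓝[>] 0) (𝓝 (-(τ * Real.sqrt ω))) ∧
    Real.sqrt ω - τ * (-(τ * Real.sqrt ω)) = α * 1 ∧
    -- uniqueness: ω = α²/(τ²+1)² is the only positive frequency for which a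
    -- nonzero solution of this exponential form fulfills the jump condition
    (∀ ω' : ℝ, 0 < ω' →
      Real.sqrt ω' - τ * (-(τ * Real.sqrt ω')) = α * 1 →
      ω' = α ^ 2 / (τ ^ 2 + 1) ^ 2) := by
  intro ω u du
  have hden : (0:ℝ) < τ ^ 2 + 1 := by positivity
  have hω : 0 < ω := by positivity
  set s : ℝ := Real.sqrt ω with hs_def
  have hs : 0 < s := Real.sqrt_pos.mpr hω
  have hsval : s = α / (τ ^ 2 + 1) := by
    have h1 : ω = (α / (τ ^ 2 + 1)) ^ 2 := by
      show α ^ 2 / (τ ^ 2 + 1) ^ 2 = _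
      rw [div_pow]
    rw [hs_def, h1, Real.sqrt_sq (by positivity)]
  have hss : s * s = ω := by rw [hs_def, Real.mul_self_sqrt hω.le]
  -- basic derivative
  have key : ∀ (c x : ℝ), HasDerivAt (fun y => Real.exp (c * y)) (c * Real.exp (c * x)) x := by
    intro c x
    have h := (hasDerivAt_id x).const_mul c
    simp only [mul_one] at h
    have h2 := h.exp
    simpa [mul_comm] using h2
  have hderiv_neg : ∀ x : ℝ, HasDerivAt (fun y => Real.exp (s * y)) (s * Real.exp (s * x)) x :=
    fun x => key s x
  have hderiv_pos : ∀ x : ℝ, HasDerivAt (fun y => τ * Real.exp (-s * y))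
      (-(τ * s) * Real.exp (-s * x)) x := by
    intro x
    have h := (key (-s) x).const_mul τ
    refine h.congr_deriv ?_
    ring
  have hderiv2_neg : ∀ x : ℝ, HasDerivAt (fun y => s * Real.exp (s * y))
      (ω * Real.exp (s * x)) x := by
    intro x
    have h := (key s x).const_mul s
    refine h.congr_deriv ?_
    rw [← hss]; ring
  have hderiv2_pos : ∀ x : ℝ, HasDerivAt (fun y => -(τ * s) * Real.exp (-s * y))
      (ω * (τ * Real.exp (-s * x))) x := by
    intro x
    have h := (key (-s) x).const_mul (-(τ * s))
    refine h.congr_deriv ?_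
    rw [← hss]; ring
  -- eventual equalities
  have hu_eq_neg : ∀ x : ℝ, x < 0 → u =ᶠ[𝓝 x] fun y => Real.exp (s * y) := by
    intro x hx
    filter_upwards [isOpen_Iio.mem_nhds hx] with y hy
    rw [mem_Iio] at hy
    show u y = _
    simp only [u]
    rw [if_pos hy]
  have hu_eq_pos : ∀ x : ℝ, 0 < x → u =ᶠ[𝓝 x] fun y => τ * Real.exp (-s * y) := by
    intro x hx
    filter_upwards [isOpen_Ioi.mem_nhds hx] with y hy
    rw [mem_Ioi] at hy
    show u y = _
    simp only [u]
    rw [if_neg (not_lt.mpr hy.le)]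
  have hdu_eq_neg : ∀ x : ℝ, x < 0 → du =ᶠ[𝓝 x] fun y => s * Real.exp (s * y) := by
    intro x hx
    filter_upwards [isOpen_Iio.mem_nhds hx] with y hy
    rw [mem_Iio] at hy
    show du y = _
    simp only [du]
    rw [if_pos hy]
  have hdu_eq_pos : ∀ x : ℝ, 0 < x → du =ᶠ[𝓝 x] fun y => -(τ * s) * Real.exp (-s * y) := by
    intro x hx
    filter_upwards [isOpen_Ioi.mem_nhds hx] with y hy
    rw [mem_Ioi] at hy
    show du y = _
    simp only [du]
    rw [if_neg (not_lt.mpr hy.le)]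
  -- continuity facts
  have hcont : ∀ c d : ℝ, Continuous (fun y => d * Real.exp (c * y)) :=
    fun c d => continuous_const.mul (Real.continuous_exp.comp (continuous_const.mul continuous_id))
  -- measurability
  have humeas : Measurable u := by
    apply Measurable.ite measurableSet_Iio
    · exact (Real.continuous_exp.comp (continuous_const.mul continuous_id)).measurable
    · exact (continuous_const.mul
        (Real.continuous_exp.comp (continuous_const.mul continuous_id))).measurable
  refine ⟨?_, ?_, ?_, ?_, ?_, (mul_one τ).symm, ?_, ?_, ?_, ?_⟩
  · -- Memℒp
    rw [memLp_two_iff_integrable_sq humeas.aestronglyMeasurable]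
    rw [← integrableOn_univ, ← Iio_union_Ici (a := (0:ℝ)), integrableOn_union,
      integrableOn_Ici_iff_integrableOn_Ioi]
    have hpos : IntegrableOn (fun x : ℝ => Real.exp (-(2 * s) * x)) (Ioi 0) :=
      exp_neg_integrableOn_Ioi 0 (by positivity)
    constructor
    · have hneg : IntegrableOn (fun x : ℝ => Real.exp ((2 * s) * x)) (Iio (0:ℝ)) := by
        rw [← (Measure.measurePreserving_neg (volume : Measure ℝ)).integrableOn_comp_preimage
            (Homeomorph.neg ℝ).measurableEmbedding]
        simp only [Function.comp_def, neg_preimage, neg_Iio, neg_neg, neg_zero]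
        refine hpos.congr_fun (fun x _ => by ring_nf) measurableSet_Ioi
      refine hneg.congr_fun (fun x hx => ?_) measurableSet_Iio
      rw [mem_Iio] at hx
      show Real.exp (2 * s * x) = u x ^ 2
      simp only [u]
      rw [if_pos hx, ← hs_def, pow_two, ← Real.exp_add,
        show s * x + s * x = 2 * s * x from by ring]
    · have hmul : IntegrableOn (fun x : ℝ => τ ^ 2 * Real.exp (-(2 * s) * x)) (Ioi (0:ℝ)) :=
        hpos.const_mul (τ ^ 2)
      refine hmul.congr_fun (fun x hx => ?_) measurableSet_Ioi
      rw [mem_Ioi] at hx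
      show τ ^ 2 * Real.exp (-(2 * s) * x) = u x ^ 2
      simp only [u]
      rw [if_neg (not_lt.mpr hx.le), ← hs_def, mul_pow, pow_two (Real.exp _), ← Real.exp_add,
        show -s * x + -s * x = -(2 * s) * x from by ring]
  · -- first derivative
    intro x hx
    rcases hx.lt_or_gt with hx | hx
    · have h := (hderiv_neg x).congr_of_eventuallyEq (hu_eq_neg x hx)
      have hval : du x = s * Real.exp (s * x) := by simp only [du]; rw [if_pos hx]
      rwa [← hval] at h
    · have h := (hderiv_pos x).congr_of_eventuallyEq (hu_eq_pos x hx)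
      have hval : du x = -(τ * s) * Real.exp (-s * x) := by
        simp only [du]; rw [if_neg (not_lt.mpr hx.le)]
      rwa [← hval] at h
  · -- second derivative
    intro x hx
    rcases hx.lt_or_gt with hx | hx
    · have h := (hderiv2_neg x).congr_of_eventuallyEq (hdu_eq_neg x hx)
      have hval : u x = Real.exp (s * x) := by simp only [u]; rw [if_pos hx]
      rwa [← hval] at h
    · have h := (hderiv2_pos x).congr_of_eventuallyEq (hdu_eq_pos x hx)
      have hval : u x = τ * Real.exp (-s * x) := by
        simp only [u]; rw [if_neg (not_lt.mpr hx.le)]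
      rwa [← hval] at h
  · -- left limit of u
    have h1 : Tendsto (fun y => Real.exp (s * y)) (𝓝[<] (0:ℝ)) (𝓝 1) := by
      have := ((hcont s 1).tendsto 0).mono_left (nhdsWithin_le_nhds (s := Iio 0))
      simpa using this
    refine h1.congr' ?_
    filter_upwards [self_mem_nhdsWithin] with y hy
    rw [mem_Iio] at hy
    show (fun y => Real.exp (s * y)) y = u y
    simp only [u]
    rw [if_pos hy]
  · -- right limit of u
    have h1 : Tendsto (fun y => τ * Real.exp (-s * y)) (𝓝[>] (0:ℝ)) (𝓝 τ) := by
      have := ((hcont (-s) τ).tendsto 0).mono_left (nhdsWithin_le_nhds (s := Ioi 0))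
      simpa using this
    refine h1.congr' ?_
    filter_upwards [self_mem_nhdsWithin] with y hy
    rw [mem_Ioi] at hy
    show (fun y => τ * Real.exp (-s * y)) y = u y
    simp only [u]
    rw [if_neg (not_lt.mpr hy.le)]
  · -- left limit of du
    have h1 : Tendsto (fun y => s * Real.exp (s * y)) (𝓝[<] (0:ℝ)) (𝓝 s) := by
      have := ((hcont s s).tendsto 0).mono_left (nhdsWithin_le_nhds (s := Iio 0))
      simpa using this
    refine h1.congr' ?_
    filter_upwards [self_mem_nhdsWithin] with y hy
    rw [mem_Iio] at hy
    show (fun y => s * Real.exp (s * y)) y = du y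
    simp only [du]
    rw [if_pos hy]
  · -- right limit of du
    have h1 : Tendsto (fun y => -(τ * s) * Real.exp (-s * y)) (𝓝[>] (0:ℝ)) (𝓝 (-(τ * s))) := by
      have := ((hcont (-s) (-(τ * s))).tendsto 0).mono_left (nhdsWithin_le_nhds (s := Ioi 0))
      simpa using this
    refine h1.congr' ?_
    filter_upwards [self_mem_nhdsWithin] with y hy
    rw [mem_Ioi] at hy
    show (fun y => -(τ * s) * Real.exp (-s * y)) y = du y
    simp only [du]
    rw [if_neg (not_lt.mpr hy.le)]
  · -- jump condition
    have hα' : s * (1 + τ ^ 2) = α := by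
      rw [hsval, div_mul_eq_mul_div, div_eq_iff hden.ne']; ring
    show s - τ * (-(τ * s)) = α * 1
    nlinarith [hα']
  · -- uniqueness
    intro ω' hω' h
    have hsq : Real.sqrt ω' * (1 + τ ^ 2) = α := by nlinarith
    have heq : Real.sqrt ω' = α / (τ ^ 2 + 1) := by
      field_simp at hsq ⊢; linarith
    have h2 : ω' = (Real.sqrt ω') ^ 2 := (Real.sq_sqrt hω'.le).symm
    rw [h2, heq, div_pow]
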